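/- Let F(x) := ∫₀ˣ (1−t⁶)^{−1/2} dt and H(x) := ∫₀ˣ (1−t²)^{−5/6} dt. For every s ∈ [0,1], H( √( 1 − ((1−s²)/(1+2s²))³ ) ) = 3 · F(s). (This is the identity sin_{6/5,2}(2x) = √(1 − ((1−g(x)²)/(1+2g(x)²))³) with g(x) = sin_{2,6}(2x/3).) -/

import Mathlib

open Set MeasureTheory Filter Topology

/-- `F = F_{2,6}`, the incomplete integral `∫₀ˣ (1−t⁶)^{−1/2} dt`. -/
noncomputable def F26 (x : ℝ) : ℝ := ∫ t in (0:ℝ)..x, (1 - t ^ 6) ^ (-(1/2) : ℝ)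

/-- `H = F_{6/5,2}`, the incomplete integral `∫₀ˣ (1−t²)^{−5/6} dt`. -/
noncomputable def H652 (x : ℝ) : ℝ := ∫ t in (0:ℝ)..x, (1 - t ^ 2) ^ (-(5/6) : ℝ)

namespace FGaux

noncomputable def g (t : ℝ) : ℝ := 3 * t * Real.sqrt ((1 + t^2 + t^4) / (1 + 2*t^2)^3)

noncomputable def g' (t : ℝ) : ℝ :=
  3 * (1 - t^2)^2 / (Real.sqrt ((1 + t^2 + t^4) / (1 + 2*t^2)^3) * (1 + 2*t^2)^4)

lemma ypos (t : ℝ) : (0:ℝ) < 1 + 2*t^2 := by positivity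

lemma wpos (t : ℝ) : (0:ℝ) < (1 + t^2 + t^4) / (1 + 2*t^2)^3 := by positivity

lemma rpos (t : ℝ) : 0 < Real.sqrt ((1 + t^2 + t^4) / (1 + 2*t^2)^3) :=
  Real.sqrt_pos.2 (wpos t)

lemma rsq (t : ℝ) : (Real.sqrt ((1 + t^2 + t^4) / (1 + 2*t^2)^3))^2
    = (1 + t^2 + t^4) / (1 + 2*t^2)^3 :=
  Real.sq_sqrt (wpos t).le

lemma rcont : Continuous fun t : ℝ => Real.sqrt ((1 + t^2 + t^4) / (1 + 2*t^2)^3) :=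
  Real.continuous_sqrt.comp <| Continuous.div (by continuity) (by continuity)
    (fun t => by positivity)

lemma gcont : Continuous g := by
  unfold g; exact (continuous_const.mul continuous_id).mul rcont

lemma g'cont : Continuous g' := by
  unfold g'
  refine Continuous.div (by continuity) (rcont.mul (by continuity)) (fun t => ?_)
  exact (mul_pos (rpos t) (pow_pos (ypos t) 4)).ne'

lemma hasDerivAt_g (t : ℝ) : HasDerivAt g (g' t) t := by
  have hy := ypos t
  have hA : HasDerivAt (fun t : ℝ => 1 + t^2 + t^4) (2*t + 4*t^3) t := by
    have h := ((hasDerivAt_pow 2 t).add (hasDerivAt_pow 4 t)).const_add (1:ℝ)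
    have he : (fun x : ℝ => 1 + (x^2 + x^4)) = fun x : ℝ => 1 + x^2 + x^4 := by
      funext x; ring
    simp only [Pi.add_apply] at h
    rw [he] at h
    exact h.congr_deriv (by norm_num)
  have hB : HasDerivAt (fun t : ℝ => (1 + 2*t^2)^3) (3 * (1 + 2*t^2)^2 * (4*t)) t := by
    have hinner : HasDerivAt (fun t : ℝ => 1 + 2*t^2) (4*t) t := by
      have h := ((hasDerivAt_pow 2 t).const_mul (2:ℝ)).const_add (1:ℝ)
      exact h.congr_deriv (by norm_num; ring)
    have h := hinner.pow 3
    exact h.congr_deriv (by norm_num)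
  have hw := hA.div hB (by positivity)
  have hr := hw.sqrt (ne_of_gt (wpos t))
  have h3t : HasDerivAt (fun x : ℝ => 3 * x) 3 t := by
    simpa using (hasDerivAt_id t).const_mul (3:ℝ)
  have hg := h3t.mul hr
  unfold g g'
  refine hg.congr_deriv (Eq.symm ?_)
  simp only [Pi.div_apply]
  have hrpos := rpos t
  have hr2 := rsq t
  set r := Real.sqrt ((1 + t^2 + t^4) / (1 + 2*t^2)^3) with hrdef
  have hr2' : r^2 * (1 + 2*t^2)^3 = 1 + t^2 + t^4 := by
    rw [hr2]; field_simp
  field_simp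
  linear_combination (-2*(1 + 2*t^2)) * hr2'

lemma one_sub_g_sq (t : ℝ) : 1 - (g t)^2 = ((1 - t^2)/(1 + 2*t^2))^3 := by
  have hy := ypos t
  unfold g
  rw [mul_pow, rsq]
  field_simp
  ring

lemma g_nonneg {t : ℝ} (ht : 0 ≤ t) : 0 ≤ g t :=
  mul_nonneg (by linarith) (Real.sqrt_nonneg _)

lemma g_le_one {t : ℝ} (ht0 : 0 ≤ t) (ht1 : t ≤ 1) : g t ≤ 1 := by
  have h := one_sub_g_sq t
  have hy := ypos t
  have hx : (0:ℝ) ≤ 1 - t^2 := by nlinarith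
  have hc : (0:ℝ) ≤ ((1 - t^2)/(1 + 2*t^2))^3 := by positivity
  have hg0 := g_nonneg ht0
  nlinarith

lemma rpow_neg_five_half_sq {x : ℝ} (hx : 0 < x) :
    (x ^ (-(5/2) : ℝ))^2 = (x^5)⁻¹ := by
  rw [← Real.rpow_natCast (x ^ (-(5/2):ℝ)) 2, ← Real.rpow_mul hx.le]
  rw [show (-(5/2):ℝ) * ((2:ℕ):ℝ) = -(5:ℝ) by push_cast; ring]
  rw [Real.rpow_neg hx.le, show (5:ℝ) = ((5:ℕ):ℝ) by norm_num, Real.rpow_natCast]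

lemma rpow_neg_half_sq {x : ℝ} (hx : 0 ≤ x) :
    (x ^ (-(1/2) : ℝ))^2 = x⁻¹ := by
  rw [← Real.rpow_natCast (x ^ (-(1/2):ℝ)) 2, ← Real.rpow_mul hx]
  rw [show (-(1/2):ℝ) * ((2:ℕ):ℝ) = -(1:ℝ) by push_cast; ring]
  rw [Real.rpow_neg hx, Real.rpow_one]

lemma key (t : ℝ) (h0 : 0 ≤ t) (h1 : t < 1) :
    g' t * (1 - (g t)^2) ^ (-(5/6) : ℝ) = 3 * (1 - t^6) ^ (-(1/2) : ℝ) := by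
  have hy := ypos t
  have hx : (0:ℝ) < 1 - t^2 := by nlinarith
  have hApos : (0:ℝ) < 1 + t^2 + t^4 := by positivity
  have hc : (0:ℝ) < (1 - t^2)/(1 + 2*t^2) := div_pos hx hy
  have h16 : (1 : ℝ) - t^6 = (1 - t^2) * (1 + t^2 + t^4) := by ring
  rw [one_sub_g_sq, h16]
  have h2 : (((1 - t^2)/(1 + 2*t^2))^3 : ℝ) ^ (-(5/6) : ℝ)
      = ((1 - t^2)/(1 + 2*t^2)) ^ (-(5/2) : ℝ) := by
    rw [← Real.rpow_natCast ((1 - t^2)/(1 + 2*t^2)) 3, ← Real.rpow_mul hc.le]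
    norm_num
  rw [h2]
  have hrpos := rpos t
  have hr2 := rsq t
  set r := Real.sqrt ((1 + t^2 + t^4) / (1 + 2*t^2)^3) with hrdef
  have hg'pos : 0 < g' t := by
    unfold g'
    rw [← hrdef]
    positivity
  have hLpos : 0 < g' t * ((1 - t^2)/(1 + 2*t^2)) ^ (-(5/2) : ℝ) :=
    mul_pos hg'pos (Real.rpow_pos_of_pos hc _)
  have hRpos : 0 < 3 * ((1 - t^2) * (1 + t^2 + t^4)) ^ (-(1/2) : ℝ) := by positivity
  have hsq : (g' t * ((1 - t^2)/(1 + 2*t^2)) ^ (-(5/2) : ℝ))^2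
      = (3 * ((1 - t^2) * (1 + t^2 + t^4)) ^ (-(1/2) : ℝ))^2 := by
    rw [mul_pow, mul_pow, rpow_neg_five_half_sq hc, rpow_neg_half_sq (by positivity)]
    unfold g'
    rw [← hrdef]
    rw [div_pow, mul_pow r ((1 + 2*t^2)^4) 2, hr2]
    have hx' := hx.ne'
    have hy' := hy.ne'
    have hA' := hApos.ne'
    field_simp
  calc g' t * ((1 - t^2)/(1 + 2*t^2)) ^ (-(5/2) : ℝ)
      = Real.sqrt ((g' t * ((1 - t^2)/(1 + 2*t^2)) ^ (-(5/2) : ℝ))^2) :=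
        (Real.sqrt_sq hLpos.le).symm
    _ = Real.sqrt ((3 * ((1 - t^2) * (1 + t^2 + t^4)) ^ (-(1/2) : ℝ))^2) := by rw [hsq]
    _ = 3 * ((1 - t^2) * (1 + t^2 + t^4)) ^ (-(1/2) : ℝ) := Real.sqrt_sq hRpos.le

lemma main_lt (s : ℝ) (h0 : 0 ≤ s) (h1 : s < 1) : H652 (g s) = 3 * F26 s := by
  have hicc : uIcc (0:ℝ) s = Icc 0 s := uIcc_of_le h0
  have hderiv : ∀ x ∈ uIcc (0:ℝ) s, HasDerivAt g (g' x) x := fun x _ => hasDerivAt_g x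
  have hg'c : ContinuousOn g' (uIcc (0:ℝ) s) := g'cont.continuousOn
  have hfc : ContinuousOn (fun u : ℝ => (1 - u^2) ^ (-(5/6) : ℝ)) (g '' uIcc (0:ℝ) s) := by
    rintro u ⟨t, ht, rfl⟩
    rw [hicc] at ht
    have ht1 : t < 1 := lt_of_le_of_lt ht.2 h1
    have hpos : 0 < 1 - (g t)^2 := by
      rw [one_sub_g_sq]
      have hxx : (0:ℝ) < 1 - t^2 := by nlinarith [ht.1]
      positivity
    apply ContinuousAt.continuousWithinAt
    exact (by fun_prop : ContinuousAt (fun u : ℝ => 1 - u^2) (g t)).rpow_const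
      (Or.inl hpos.ne')
  have hcv := intervalIntegral.integral_comp_smul_deriv' hderiv hg'c hfc
  have hg0 : g 0 = 0 := by simp [g]
  rw [hg0] at hcv
  have hkey : ∀ x ∈ uIcc (0:ℝ) s,
      g' x • ((fun u : ℝ => (1 - u^2) ^ (-(5/6) : ℝ)) ∘ g) x
        = 3 * (1 - x^6) ^ (-(1/2) : ℝ) := by
    intro x hx
    rw [hicc] at hx
    have := key x hx.1 (lt_of_le_of_lt hx.2 h1)
    simpa [Function.comp] using this
  have hc : (∫ x in (0:ℝ)..s, g' x • ((fun u : ℝ => (1 - u^2) ^ (-(5/6) : ℝ)) ∘ g) x)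
      = ∫ x in (0:ℝ)..s, 3 * (1 - x^6) ^ (-(1/2) : ℝ) :=
    intervalIntegral.integral_congr hkey
  have hH : H652 (g s) = ∫ x in (0:ℝ)..s, 3 * (1 - x^6) ^ (-(1/2) : ℝ) := by
    simp only [H652]
    rw [← hcv, hc]
  rw [hH, F26, ← intervalIntegral.integral_const_mul]

lemma intF : IntervalIntegrable (fun t : ℝ => (1 - t^6) ^ (-(1/2):ℝ)) volume 0 1 := by
  have hd : IntervalIntegrable (fun t : ℝ => (1 - t) ^ (-(1/2):ℝ)) volume 0 1 := by
    have h := ((intervalIntegral.intervalIntegrable_rpow' (a := 0) (b := 1)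
      (r := -(1/2)) (by norm_num)).comp_sub_left 1).symm
    simpa using h
  apply hd.mono_fun
  · exact (by fun_prop : Measurable fun t : ℝ => (1 - t^6) ^ (-(1/2):ℝ)).aestronglyMeasurable
  · refine (ae_restrict_iff' measurableSet_uIoc).mpr (ae_of_all _ fun t ht => ?_)
    rw [uIoc_of_le (zero_le_one (α := ℝ))] at ht
    have h5 : t^5 ≤ 1 := pow_le_one₀ ht.1.le ht.2
    have h6 : t^6 ≤ t := by nlinarith [ht.1.le]
    have h0 : (0:ℝ) ≤ 1 - t^6 := by linarith [ht.2]
    have hb : (0:ℝ) ≤ 1 - t := by linarith [ht.2]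
    simp only [Real.norm_eq_abs]
    rw [abs_of_nonneg (Real.rpow_nonneg h0 _), abs_of_nonneg (Real.rpow_nonneg hb _)]
    rcases eq_or_lt_of_le ht.2 with h | h
    · subst h
      norm_num
    · have hbp : (0:ℝ) < 1 - t := by linarith
      have hle : (1:ℝ) - t ≤ 1 - t^6 := by linarith
      exact Real.rpow_le_rpow_of_nonpos hbp hle (by norm_num)

lemma intH : IntervalIntegrable (fun t : ℝ => (1 - t^2) ^ (-(5/6):ℝ)) volume 0 1 := by
  have hd : IntervalIntegrable (fun t : ℝ => (1 - t) ^ (-(5/6):ℝ)) volume 0 1 := by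
    have h := ((intervalIntegral.intervalIntegrable_rpow' (a := 0) (b := 1)
      (r := -(5/6)) (by norm_num)).comp_sub_left 1).symm
    simpa using h
  apply hd.mono_fun
  · exact (by fun_prop : Measurable fun t : ℝ => (1 - t^2) ^ (-(5/6):ℝ)).aestronglyMeasurable
  · refine (ae_restrict_iff' measurableSet_uIoc).mpr (ae_of_all _ fun t ht => ?_)
    rw [uIoc_of_le (zero_le_one (α := ℝ))] at ht
    have h2 : t^2 ≤ t := by nlinarith [ht.1.le, ht.2]
    have h0 : (0:ℝ) ≤ 1 - t^2 := by linarith [ht.2]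
    have hb : (0:ℝ) ≤ 1 - t := by linarith [ht.2]
    simp only [Real.norm_eq_abs]
    rw [abs_of_nonneg (Real.rpow_nonneg h0 _), abs_of_nonneg (Real.rpow_nonneg hb _)]
    rcases eq_or_lt_of_le ht.2 with h | h
    · subst h
      norm_num
    · have hbp : (0:ℝ) < 1 - t := by linarith
      have hle : (1:ℝ) - t ≤ 1 - t^2 := by linarith
      exact Real.rpow_le_rpow_of_nonpos hbp hle (by norm_num)

lemma contF : ContinuousOn F26 (Icc 0 1) := by
  have h := intervalIntegral.continuousOn_primitive_interval' intF
    (left_mem_uIcc (a := (0:ℝ)) (b := 1))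
  rw [uIcc_of_le (zero_le_one (α := ℝ))] at h
  exact h

lemma contH : ContinuousOn H652 (Icc 0 1) := by
  have h := intervalIntegral.continuousOn_primitive_interval' intH
    (left_mem_uIcc (a := (0:ℝ)) (b := 1))
  rw [uIcc_of_le (zero_le_one (α := ℝ))] at h
  exact h

lemma main (s : ℝ) (h0 : 0 ≤ s) (h1 : s ≤ 1) : H652 (g s) = 3 * F26 s := by
  rcases lt_or_eq_of_le h1 with h | h
  · exact main_lt s h0 h
  · subst h
    have hmaps : MapsTo g (Icc (0:ℝ) 1) (Icc (0:ℝ) 1) := fun x hx =>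
      ⟨g_nonneg hx.1, g_le_one hx.1 hx.2⟩
    have hΦc : ContinuousOn (fun x => H652 (g x) - 3 * F26 x) (Icc (0:ℝ) 1) :=
      (contH.comp gcont.continuousOn hmaps).sub (continuousOn_const.mul contF)
    have h1mem : (1:ℝ) ∈ Icc (0:ℝ) 1 := ⟨zero_le_one, le_refl 1⟩
    have hclos : (1:ℝ) ∈ closure (Ico (0:ℝ) 1) := by
      rw [closure_Ico (by norm_num : (0:ℝ) ≠ 1)]
      exact h1mem
    haveI hne : (𝓝[Ico (0:ℝ) 1] 1).NeBot := mem_closure_iff_nhdsWithin_neBot.1 hclos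
    have ht1 : Tendsto (fun x => H652 (g x) - 3 * F26 x) (𝓝[Ico (0:ℝ) 1] 1)
        (𝓝 (H652 (g 1) - 3 * F26 1)) :=
      (hΦc 1 h1mem).mono_left (nhdsWithin_mono _ Ico_subset_Icc_self)
    have ht2 : Tendsto (fun x => H652 (g x) - 3 * F26 x) (𝓝[Ico (0:ℝ) 1] 1) (𝓝 0) := by
      refine Tendsto.congr' ?_ tendsto_const_nhds
      filter_upwards [self_mem_nhdsWithin] with x hx
      have h := main_lt x hx.1 hx.2
      show (0:ℝ) = H652 (g x) - 3 * F26 x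
      linarith
    have hΦ1 : H652 (g 1) - 3 * F26 1 = 0 := tendsto_nhds_unique ht1 ht2
    linarith

end FGaux

/-- The identity `sin_{6/5,2}(2x) = √(1 − ((1−g(x)²)/(1+2g(x)²))³)` with
`g(x) = sin_{2,6}(2x/3)`, expressed via the integrals. -/
theorem f_in_terms_of_g (s : ℝ) (hs : s ∈ Set.Icc (0:ℝ) 1) :
    H652 (Real.sqrt (1 - ((1 - s ^ 2) / (1 + 2 * s ^ 2)) ^ 3)) = 3 * F26 s := by
  obtain ⟨h0, h1⟩ := hs
  have hgeq : Real.sqrt (1 - ((1 - s ^ 2) / (1 + 2 * s ^ 2)) ^ 3) = FGaux.g s := by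
    have h := FGaux.one_sub_g_sq s
    have h2 : 1 - ((1 - s ^ 2) / (1 + 2 * s ^ 2)) ^ 3 = (FGaux.g s)^2 := by linarith
    rw [h2, Real.sqrt_sq (FGaux.g_nonneg h0)]
  rw [hgeq]
  exact FGaux.main s h0 h1
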